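/- Let K ⊆ ℝ^n be compact and Ψ : ℝ → ℝ a continuous squashing function. Then the class of ridge-function combinations x ↦ Σ_{j=1}^N ω_j Ψ(a_j · x + b_j), with ω_j, b_j ∈ ℝ and a_j ∈ ℝ^n, is dense in C(K) with the uniform norm. -/
import Mathlib

open Filter Topology

lemma approx1D (Ψ : ℝ → ℝ) (hΨ0 : ∀ t, Ψ t ∈ Set.Icc (0:ℝ) 1)
    (hΨtop : Tendsto Ψ atTop (nhds 1)) (hΨbot : Tendsto Ψ atBot (nhds 0))
    (f : ℝ → ℝ) (hf : Continuous f) (R ε : ℝ) (hR : 1 ≤ R) (hε : 0 < ε) :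
    ∃ (N : ℕ) (ω k b : Fin N → ℝ), ∀ s ∈ Set.Icc (-R) R,
      |f s - ∑ j, ω j * Ψ (k j * s + b j)| ≤ ε := by
  have hR0 : (0:ℝ) < R := lt_of_lt_of_le one_pos hR
  set ε3 := ε/3 with hε3def
  have hε3 : 0 < ε3 := by positivity
  have hUC : UniformContinuousOn f (Set.Icc (-R) R) :=
    isCompact_Icc.uniformContinuousOn_of_continuous hf.continuousOn
  rw [Metric.uniformContinuousOn_iff] at hUC
  obtain ⟨δ, hδpos, hδ⟩ := hUC ε3 hε3
  set m : ℕ := ⌈2*R/δ⌉₊ + 1 with hmdef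
  have hm1 : 1 ≤ m := Nat.le_add_left 1 _
  have hmpos : (0:ℝ) < m := by positivity
  set h : ℝ := 2*R/m with hhdef
  have hhpos : 0 < h := by positivity
  have hhδ : h < δ := by
    have h1 : 2*R/δ ≤ (⌈2*R/δ⌉₊ : ℝ) := Nat.le_ceil _
    have h2 : 2*R/δ < (m : ℝ) := by
      have : ((⌈2*R/δ⌉₊ : ℕ) : ℝ) < m := by exact_mod_cast Nat.lt_succ_self _
      linarith
    rw [div_lt_iff₀ hδpos] at h2
    rw [hhdef, div_lt_iff₀ hmpos]
    linarith
  set t : ℕ → ℝ := fun i => -R + h * i with htdef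
  have htm : t m = R := by
    simp only [htdef, hhdef]
    field_simp
    ring
  have htmono : ∀ i j : ℕ, i ≤ j → t i ≤ t j := by
    intro i j hij
    simp only [htdef]
    have : (i:ℝ) ≤ j := by exact_mod_cast hij
    nlinarith
  have htmem : ∀ i, i ≤ m → t i ∈ Set.Icc (-R) R := by
    intro i hi
    constructor
    · have : (0:ℝ) ≤ h * i := by positivity
      simp only [htdef]; linarith
    · have := htmono i m hi
      rw [htm] at this; exact this
  have htsucc : ∀ i : ℕ, t (i+1) = t i + h := by
    intro i; simp only [htdef]; push_cast; ring
  set d : ℕ → ℝ := fun i => f (t (i+1)) - f (t i) with hddef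
  have hdsmall : ∀ i, i < m → |d i| ≤ ε3 := by
    intro i hi
    have h1 : dist (t (i+1)) (t i) < δ := by
      rw [Real.dist_eq, htsucc i]
      rw [show t i + h - t i = h by ring, abs_of_pos hhpos]
      exact hhδ
    have := hδ (t (i+1)) (htmem _ hi) (t i) (htmem _ (le_of_lt hi)) h1
    rw [Real.dist_eq] at this
    exact le_of_lt this
  set ε' : ℝ := ε3 / (m * ε3 + 1) with hε'def
  have hε'pos : 0 < ε' := by positivity
  have hε'key : (m:ℝ) * (ε3 * ε') ≤ ε3 := by
    have hden : 0 < (m:ℝ) * ε3 + 1 := by positivity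
    rw [hε'def]
    rw [show (m:ℝ) * (ε3 * (ε3 / ((m:ℝ)*ε3+1))) = ((m:ℝ)*ε3*ε3)/((m:ℝ)*ε3+1) by ring,
      div_le_iff₀ hden]
    nlinarith
  obtain ⟨T1, hT1⟩ : ∃ T1, ∀ s, T1 ≤ s → |Ψ s - 1| ≤ ε' := by
    obtain ⟨T1, hT1⟩ := Metric.tendsto_atTop.mp hΨtop ε' hε'pos
    exact ⟨T1, fun s hs => by have := hT1 s hs; rw [Real.dist_eq] at this; linarith⟩
  obtain ⟨T2, hT2⟩ : ∃ T2, ∀ s, s ≤ T2 → |Ψ s| ≤ ε' := by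
    have : Tendsto (fun s => Ψ (-s)) atTop (nhds 0) := hΨbot.comp tendsto_neg_atTop_atBot
    obtain ⟨T2, hT2⟩ := Metric.tendsto_atTop.mp this ε' hε'pos
    refine ⟨-T2, fun s hs => ?_⟩
    have := hT2 (-s) (by linarith)
    rw [Real.dist_eq] at this
    simp only [neg_neg, sub_zero] at this
    exact le_of_lt this
  set P : ℝ := max 1 (max T1 (-T2)) with hPdef
  have hP1 : (1:ℝ) ≤ P := le_max_left _ _
  have hPT1 : T1 ≤ P := le_trans (le_max_left _ _) (le_max_right _ _)
  have hPT2 : -P ≤ T2 := by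
    have : -T2 ≤ P := le_trans (le_max_right _ _) (le_max_right _ _)
    linarith
  set M : ℝ := 2 * P / h with hMdef
  have hMpos : 0 < M := by positivity
  have hMh : M * (h/2) = P := by rw [hMdef]; field_simp
  have hup : ∀ s : ℝ, h/2 ≤ s → |Ψ (M*s) - 1| ≤ ε' := by
    intro s hs
    apply hT1
    have : M * (h/2) ≤ M * s := mul_le_mul_of_nonneg_left hs hMpos.le
    linarith [hMh, hPT1]
  have hdown : ∀ s : ℝ, s ≤ -(h/2) → |Ψ (M*s)| ≤ ε' := by
    intro s hs
    apply hT2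
    have : M * s ≤ M * (-(h/2)) := mul_le_mul_of_nonneg_left hs hMpos.le
    have h2 : M * (-(h/2)) = -P := by rw [← hMh]; ring
    linarith [hPT2]
  obtain ⟨B0, hB0⟩ : ∃ B0, 1/2 ≤ Ψ B0 :=
    (hΨtop.eventually (eventually_ge_nhds (by norm_num : (1:ℝ)/2 < 1))).exists
  have hB0pos : 0 < Ψ B0 := lt_of_lt_of_le (by norm_num) hB0
  set c : ℕ → ℝ := fun i => t i + h/2 with hcdef
  refine ⟨m+1, Fin.cons (f (t 0) / Ψ B0) (fun i : Fin m => d i),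
    Fin.cons 0 (fun _ => M), Fin.cons B0 (fun i : Fin m => -(M * c i)), ?_⟩
  intro s hs
  have hsum : ∑ j : Fin (m+1), (Fin.cons (f (t 0) / Ψ B0) (fun i : Fin m => d i) : Fin (m+1) → ℝ) j
        * Ψ ((Fin.cons 0 (fun _ => M) : Fin (m+1) → ℝ) j * s
          + (Fin.cons B0 (fun i : Fin m => -(M * c i)) : Fin (m+1) → ℝ) j)
      = f (t 0) + ∑ i ∈ Finset.range m, d i * Ψ (M * (s - c i)) := by
    rw [Fin.sum_univ_succ]
    simp only [Fin.cons_zero, Fin.cons_succ]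
    rw [zero_mul, zero_add, div_mul_cancel₀ _ (ne_of_gt hB0pos)]
    congr 1
    rw [Fin.sum_univ_eq_sum_range (fun i => d i * Ψ (M * s + -(M * c i)))]
    apply Finset.sum_congr rfl
    intro i _
    congr 1
    ring_nf
  rw [hsum]
  -- choose transition index
  set istar : ℕ := min (m-1) ⌊(s+R)/h⌋₊ with histardef
  have histar : istar < m := lt_of_le_of_lt (min_le_left _ _) (Nat.sub_lt (by omega) one_pos)
  have hsR : 0 ≤ (s + R)/h := by
    have h1 : -R ≤ s := hs.1
    apply div_nonneg _ hhpos.le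
    linarith
  have hts1 : t istar ≤ s := by
    have h1 : (istar : ℝ) ≤ (s+R)/h := by
      have h2 : (istar:ℕ) ≤ ⌊(s+R)/h⌋₊ := min_le_right _ _
      calc (istar:ℝ) ≤ (⌊(s+R)/h⌋₊ : ℝ) := by exact_mod_cast h2
        _ ≤ (s+R)/h := Nat.floor_le hsR
    have h3 : h * (istar:ℝ) ≤ s + R := by
      rw [← le_div_iff₀' hhpos]
      exact h1
    simp only [htdef]
    linarith
  have hts2 : s ≤ t (istar + 1) := by
    by_cases hcase : ⌊(s+R)/h⌋₊ ≤ m - 1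
    · have he : istar = ⌊(s+R)/h⌋₊ := min_eq_right hcase
      have h1 : (s+R)/h < (⌊(s+R)/h⌋₊ : ℝ) + 1 := Nat.lt_floor_add_one _
      have h2 : s + R < h * ((istar:ℝ) + 1) := by
        rw [he]
        rw [div_lt_iff₀ hhpos] at h1
        linarith [h1]
      simp only [htdef]
      push_cast
      nlinarith
    · have he : istar = m - 1 := min_eq_left (le_of_not_ge hcase)
      have h1 : istar + 1 = m := by omega
      rw [h1, htm]
      exact hs.2
  set θ : ℝ := Ψ (M * (s - c istar)) with hθdef
  have hθmem : θ ∈ Set.Icc (0:ℝ) 1 := hΨ0 _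
  -- target sum
  set F : ℕ → ℝ := fun i => if i < istar then d i else if i = istar then d i * θ else 0 with hFdef
  clear_value F θ istar c d t M P ε' m ε3
  have htarget : ∑ i ∈ Finset.range m, F i = f (t istar) - f (t 0) + d istar * θ := by
    rw [← Finset.sum_range_add_sum_Ico F (Nat.succ_le_of_lt histar)]
    have hz : ∑ i ∈ Finset.Ico (istar+1) m, F i = 0 := by
      apply Finset.sum_eq_zero
      intro i hi
      have := (Finset.mem_Ico.mp hi).1
      simp only [hFdef]
      rw [if_neg (by omega), if_neg (by omega)]
    rw [hz, add_zero, Finset.sum_range_succ]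
    have hFi : F istar = d istar * θ := by
      simp [hFdef]
    have hFlt : ∑ i ∈ Finset.range istar, F i = ∑ i ∈ Finset.range istar, d i := by
      apply Finset.sum_congr rfl
      intro i hi
      have := Finset.mem_range.mp hi
      simp only [hFdef]
      rw [if_pos this]
    rw [hFi, hFlt, hddef, Finset.sum_range_sub (fun i => f (t i))]
  -- error bound on each term
  have hterm : ∀ i ∈ Finset.range m, |d i * Ψ (M * (s - c i)) - F i| ≤ ε3 * ε' := by
    intro i hi
    have him : i < m := Finset.mem_range.mp hi
    have hdi : |d i| ≤ ε3 := hdsmall i him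
    rcases lt_trichotomy i istar with hlt | heq | hgt
    · simp only [hFdef]
      rw [if_pos hlt]
      have hge : h/2 ≤ s - c i := by
        have h1 : t (i+1) ≤ t istar := htmono _ _ hlt
        have h2 := htsucc i
        have h3 := hts1
        simp only [hcdef]
        linarith [hts1, h1, h2]
      have := hup _ hge
      calc |d i * Ψ (M * (s - c i)) - d i| = |d i| * |Ψ (M*(s - c i)) - 1| := by
            rw [← abs_mul]; congr 1; ring
        _ ≤ ε3 * ε' := mul_le_mul hdi this (abs_nonneg _) hε3.le
    · simp only [hFdef]
      rw [if_neg (by omega), if_pos heq, heq, ← hθdef]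
      simp only [sub_self, abs_zero]
      positivity
    · simp only [hFdef]
      rw [if_neg (by omega), if_neg (by omega)]
      have hle : s - c i ≤ -(h/2) := by
        have h1 : t (istar + 1) ≤ t i := htmono _ _ hgt
        simp only [hcdef]
        linarith [hts2, h1]
      have := hdown _ hle
      calc |d i * Ψ (M * (s - c i)) - 0| = |d i| * |Ψ (M*(s - c i))| := by
            rw [sub_zero, abs_mul]
        _ ≤ ε3 * ε' := mul_le_mul hdi this (abs_nonneg _) hε3.le
  have hsumerr : |∑ i ∈ Finset.range m, d i * Ψ (M * (s - c i)) - ∑ i ∈ Finset.range m, F i| ≤ ε3 := by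
    rw [← Finset.sum_sub_distrib]
    calc |∑ i ∈ Finset.range m, (d i * Ψ (M * (s - c i)) - F i)|
        ≤ ∑ i ∈ Finset.range m, |d i * Ψ (M * (s - c i)) - F i| := Finset.abs_sum_le_sum_abs _ _
      _ ≤ ∑ _i ∈ Finset.range m, ε3 * ε' := Finset.sum_le_sum hterm
      _ = (m:ℝ) * (ε3 * ε') := by rw [Finset.sum_const, Finset.card_range]; simp [nsmul_eq_mul]
      _ ≤ ε3 := hε'key
  have hclose : |f s - (f (t istar) + d istar * θ)| ≤ ε3 + ε3 := by
    have h1 : |f s - f (t istar)| ≤ ε3 := by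
      have hd1 : dist s (t istar) < δ := by
        rw [Real.dist_eq, abs_of_nonneg (by linarith)]
        have := htsucc istar
        linarith [hhδ]
      have := hδ s hs (t istar) (htmem _ (le_of_lt histar)) hd1
      rw [Real.dist_eq] at this
      exact this.le
    have h2 : |d istar * θ| ≤ ε3 := by
      rw [abs_mul]
      calc |d istar| * |θ| ≤ ε3 * 1 := by
            apply mul_le_mul (hdsmall _ histar) _ (abs_nonneg _) hε3.le
            rw [abs_of_nonneg hθmem.1]; exact hθmem.2
        _ = ε3 := mul_one _
    calc |f s - (f (t istar) + d istar * θ)|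
        ≤ |f s - f (t istar)| + |d istar * θ| := by
          rw [show f s - (f (t istar) + d istar * θ) = (f s - f (t istar)) - d istar * θ by ring]
          exact abs_sub _ _
      _ ≤ ε3 + ε3 := add_le_add h1 h2
  calc |f s - (f (t 0) + ∑ i ∈ Finset.range m, d i * Ψ (M * (s - c i)))|
      ≤ |f s - (f (t istar) + d istar * θ)|
        + |∑ i ∈ Finset.range m, d i * Ψ (M * (s - c i)) - ∑ i ∈ Finset.range m, F i| := by
        rw [htarget]
        have : f s - (f (t 0) + ∑ i ∈ Finset.range m, d i * Ψ (M * (s - c i)))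
            = (f s - (f (t istar) + d istar * θ))
              - (∑ i ∈ Finset.range m, d i * Ψ (M * (s - c i))
                - (f (t istar) - f (t 0) + d istar * θ)) := by ring
        rw [this]
        exact abs_sub _ _
    _ ≤ (ε3 + ε3) + ε3 := add_le_add hclose hsumerr
    _ = ε := by rw [hε3def]; ring

open MeasureTheory

theorem ridge_functions_dense_in_CK
    {n : ℕ} (K : Set (Fin n → ℝ)) (hK : IsCompact K)
    (Ψ : ℝ → ℝ) (hΨc : Continuous Ψ) (hΨ0 : ∀ t, Ψ t ∈ Set.Icc (0 : ℝ) 1)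
    (hΨmono : Monotone Ψ) (hΨtop : Tendsto Ψ atTop (nhds 1))
    (hΨbot : Tendsto Ψ atBot (nhds 0)) :
    closure {g : C(K, ℝ) | ∃ (N : ℕ) (ω b : Fin N → ℝ) (a : Fin N → (Fin n → ℝ)),
        ∀ x : K, g x = ∑ j, ω j * Ψ (∑ i, a j i * (x : Fin n → ℝ) i + b j)}
      = Set.univ := by
  haveI : CompactSpace K := isCompact_iff_compactSpace.mp hK
  set S := {g : C(K, ℝ) | ∃ (N : ℕ) (ω b : Fin N → ℝ) (a : Fin N → (Fin n → ℝ)),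
      ∀ x : K, g x = ∑ j, ω j * Ψ (∑ i, a j i * (x : Fin n → ℝ) i + b j)} with hSdef
  -- S is a submodule
  have hlincont : ∀ a : Fin n → ℝ, Continuous fun x : K => ∑ i, a i * (x : Fin n → ℝ) i :=
    fun a => continuous_finset_sum _ fun i _ =>
      continuous_const.mul ((continuous_apply i).comp continuous_subtype_val)
  let V : Submodule ℝ C(K, ℝ) :=
    { carrier := S
      zero_mem' := ⟨0, Fin.elim0, Fin.elim0, Fin.elim0, fun x => by simp⟩
      add_mem' := by
        rintro g₁ g₂ ⟨N₁, ω₁, b₁, a₁, h₁⟩ ⟨N₂, ω₂, b₂, a₂, h₂⟩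
        refine ⟨N₁ + N₂, Fin.append ω₁ ω₂, Fin.append b₁ b₂, Fin.append a₁ a₂, fun x => ?_⟩
        simp only [ContinuousMap.add_apply, h₁ x, h₂ x, Fin.sum_univ_add, Fin.append_left,
          Fin.append_right]
      smul_mem' := by
        rintro r g ⟨N, ω, b, a, hg⟩
        refine ⟨N, fun j => r * ω j, b, a, fun x => ?_⟩
        simp only [ContinuousMap.smul_apply, hg x, smul_eq_mul, Finset.mul_sum]
        exact Finset.sum_congr rfl fun j _ => by ring }
  -- exponential ridge functions lie in the closure of S
  have hexp : ∀ g : C(K, ℝ), ∀ a : Fin n → ℝ,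
      (∀ x : K, g x = Real.exp (∑ i, a i * (x : Fin n → ℝ) i)) → g ∈ closure S := by
    intro g a hg
    rw [Metric.mem_closure_iff]
    intro ε hε
    set ℓ : C(K, ℝ) := ⟨fun x => ∑ i, a i * (x : Fin n → ℝ) i, hlincont a⟩ with hℓdef
    set R : ℝ := max 1 ‖ℓ‖ with hRdef
    have hR1 : 1 ≤ R := le_max_left _ _
    have hRb : ∀ x : K, ℓ x ∈ Set.Icc (-R) R := by
      intro x
      have h1 : |ℓ x| ≤ ‖ℓ‖ := by
        have := ℓ.norm_coe_le_norm x
        simpa [Real.norm_eq_abs] using this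
      have h2 : ‖ℓ‖ ≤ R := le_max_right _ _
      have h2 : |ℓ x| ≤ R := h1.trans (le_max_right _ _)
      exact ⟨(abs_le.mp h2).1, (abs_le.mp h2).2⟩
    obtain ⟨N, ω, k, b, hb⟩ := approx1D Ψ hΨ0 hΨtop hΨbot Real.exp Real.continuous_exp
      R (ε/2) hR1 (by positivity)
    set gN : C(K, ℝ) := ⟨fun x => ∑ j, ω j * Ψ (k j * ℓ x + b j),
      continuous_finset_sum _ fun j _ => continuous_const.mul
        (hΨc.comp ((continuous_const.mul ℓ.continuous).add continuous_const))⟩ with hgNdef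
    refine ⟨gN, ⟨N, ω, b, fun j => k j • a, fun x => ?_⟩, ?_⟩
    · simp only [hgNdef, ContinuousMap.coe_mk]
      refine Finset.sum_congr rfl fun j _ => ?_
      have hkey : k j * ℓ x = ∑ i, (k j • a) i * (x : Fin n → ℝ) i := by
        simp only [hℓdef, ContinuousMap.coe_mk, Pi.smul_apply, smul_eq_mul, Finset.mul_sum]
        exact Finset.sum_congr rfl fun i _ => by ring
      rw [hkey]
    · have hle : dist g gN ≤ ε/2 := by
        rw [ContinuousMap.dist_le (by positivity)]
        intro x
        rw [Real.dist_eq, hg x]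
        exact hb (ℓ x) (hRb x)
      linarith
  -- the exponential submonoid
  let Esub : Submonoid C(K, ℝ) :=
    { carrier := {g : C(K, ℝ) | ∃ a : Fin n → ℝ,
        ∀ x : K, g x = Real.exp (∑ i, a i * (x : Fin n → ℝ) i)}
      one_mem' := ⟨0, fun x => by simp⟩
      mul_mem' := by
        rintro g₁ g₂ ⟨a₁, h₁⟩ ⟨a₂, h₂⟩
        refine ⟨a₁ + a₂, fun x => ?_⟩
        rw [ContinuousMap.mul_apply, h₁ x, h₂ x, ← Real.exp_add, ← Finset.sum_add_distrib]
        congr 1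
        exact Finset.sum_congr rfl fun i _ => by simp [add_mul] }
  -- Stone-Weierstrass for the adjoined algebra
  let A : Subalgebra ℝ C(K, ℝ) := Algebra.adjoin ℝ (Esub : Set C(K, ℝ))
  have hAsep : A.SeparatesPoints := by
    intro x y hxy
    set a : Fin n → ℝ := fun i => (x : Fin n → ℝ) i - (y : Fin n → ℝ) i with hadef
    set g : C(K, ℝ) := ⟨fun z => Real.exp (∑ i, a i * (z : Fin n → ℝ) i),
      Real.continuous_exp.comp (hlincont a)⟩ with hgdef
    refine ⟨g, ⟨g, Algebra.subset_adjoin ⟨a, fun z => rfl⟩, rfl⟩, ?_⟩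
    simp only [hgdef, ContinuousMap.coe_mk]
    have hlt : ∑ i, a i * (y : Fin n → ℝ) i < ∑ i, a i * (x : Fin n → ℝ) i := by
      have hne : ∃ i, (x : Fin n → ℝ) i ≠ (y : Fin n → ℝ) i := by
        by_contra hcon
        push_neg at hcon
        exact hxy (Subtype.ext (funext hcon))
      obtain ⟨i0, hi0⟩ := hne
      apply Finset.sum_lt_sum
      · intro i _
        simp only [hadef]
        nlinarith [sq_nonneg ((x : Fin n → ℝ) i - (y : Fin n → ℝ) i)]
      · refine ⟨i0, Finset.mem_univ _, ?_⟩
        simp only [hadef]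
        have hsq : (0:ℝ) < ((x : Fin n → ℝ) i0 - (y : Fin n → ℝ) i0)^2 :=
          lt_of_le_of_ne (sq_nonneg _) (Ne.symm (pow_ne_zero 2 (sub_ne_zero.mpr hi0)))
        nlinarith
    exact ne_of_gt (Real.exp_lt_exp.mpr hlt)
  have hA : A.topologicalClosure = ⊤ :=
    ContinuousMap.subalgebra_topologicalClosure_eq_top_of_separatesPoints A hAsep
  -- A is contained in the closure of S
  have hAW : (A : Set C(K, ℝ)) ⊆ closure S := by
    have h1 : Subalgebra.toSubmodule A = Submodule.span ℝ (Submonoid.closure (Esub : Set C(K, ℝ)) : Set C(K, ℝ)) :=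
      Algebra.adjoin_eq_span ℝ _
    rw [Submonoid.closure_eq] at h1
    intro g hg
    have hg' : g ∈ Submodule.span ℝ (Esub : Set C(K, ℝ)) := by
      rw [← h1]; exact hg
    have hspan : Submodule.span ℝ (Esub : Set C(K, ℝ)) ≤ V.topologicalClosure := by
      apply Submodule.span_le.mpr
      intro e he
      obtain ⟨a, ha⟩ := he
      exact hexp e a ha
    exact hspan hg'
  -- conclude
  apply Set.eq_univ_of_univ_subset
  have h2 : closure (A : Set C(K, ℝ)) = Set.univ := by
    have := congrArg (fun B : Subalgebra ℝ C(K, ℝ) => (B : Set C(K, ℝ))) hA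
    simpa [Subalgebra.topologicalClosure_coe] using this
  rw [← h2]
  calc closure (A : Set C(K, ℝ)) ⊆ closure (closure S) := closure_mono hAW
    _ = closure S := closure_closure
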